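/- Let C be a linear code over F_q with parity-check matrix H (a generator matrix of C⊥). Then C is LCD if and only if H·Hᵀ is nonsingular. -/

import Mathlib

open Matrix Finset

def dualCode {F : Type*} [Field F] {n : ℕ} (C : Submodule F (Fin n → F)) :
    Submodule F (Fin n → F) where
  carrier := {x | ∀ y ∈ C, ∑ i, x i * y i = 0}
  zero_mem' := by intro y hy; simp
  add_mem' := by
    intro a b ha hb y hy
    have h1 := ha y hy; have h2 := hb y hy
    simp [add_mul, Finset.sum_add_distrib, h1, h2]
  smul_mem' := by
    intro c a ha y hy
    have h1 := ha y hy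
    simp [smul_eq_mul, mul_assoc, ← Finset.mul_sum, h1]

def IsLCD {F : Type*} [Field F] {n : ℕ} (C : Submodule F (Fin n → F)) : Prop :=
  C ⊓ dualCode C = ⊥

open Classical in
noncomputable def wt {F : Type*} [Field F] {n : ℕ} (x : Fin n → F) : ℕ :=
  (Finset.univ.filter fun i => x i ≠ 0).card

def monoMap {F : Type*} [Field F] {n : ℕ} (σ : Equiv.Perm (Fin n)) (c : Fin n → F) :
    (Fin n → F) →ₗ[F] (Fin n → F) where
  toFun x := fun j => c j * x (σ j)
  map_add' := by intro a b; funext j; simp [mul_add]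
  map_smul' := by intro r a; funext j; simp [smul_eq_mul]; ring

def CodeEquiv {F : Type*} [Field F] {n : ℕ} (C C' : Submodule F (Fin n → F)) : Prop :=
  ∃ (σ : Equiv.Perm (Fin n)) (c : Fin n → F), (∀ i, c i ≠ 0) ∧ C' = C.map (monoMap σ c)

def extendZero (F : Type*) [Field F] (n : ℕ) : (Fin n → F) →ₗ[F] (Fin (n+1) → F) where
  toFun x := Fin.snoc x 0
  map_add' := by intro a b; funext j; refine Fin.lastCases ?_ ?_ j <;> simp
  map_smul' := by intro r a; funext j; refine Fin.lastCases ?_ ?_ j <;> simp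

def hasMinWeight {F : Type*} [Field F] {n : ℕ} (C : Submodule F (Fin n → F)) (d : ℕ) : Prop :=
  (∃ x ∈ C, x ≠ 0 ∧ wt x = d) ∧ ∀ x ∈ C, x ≠ 0 → d ≤ wt x

section Aux

variable {F : Type*} [Field F] {n : ℕ}

noncomputable def stdForm (F : Type*) [Field F] (n : ℕ) :
    LinearMap.BilinForm F (Fin n → F) :=
  LinearMap.mk₂ F (fun x y => ∑ i, x i * y i)
    (by intro a b y; simp [add_mul, Finset.sum_add_distrib])
    (by intro c a y; simp [Finset.mul_sum, mul_assoc])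
    (by intro x a b; simp [mul_add, Finset.sum_add_distrib])
    (by intro c x y; simp [Finset.mul_sum]; ring_nf; simp [mul_assoc, mul_left_comm])

@[simp] lemma stdForm_apply (x y : Fin n → F) : stdForm F n x y = ∑ i, x i * y i := rfl

lemma stdForm_refl : (stdForm F n).IsRefl := by
  intro x y h
  simpa [mul_comm] using h

lemma stdForm_nondeg : (stdForm F n).Nondegenerate := by
  classical
  refine ⟨?_, ?_⟩
  · intro x hx
    funext i
    have := hx (Pi.single i 1)
    simpa [Pi.single_apply, Finset.sum_ite_eq, mul_comm] using this
  · intro x hx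
    funext i
    have := hx (Pi.single i 1)
    simpa [Pi.single_apply, Finset.sum_ite_eq, mul_comm] using this

lemma dualCode_eq_orthogonal (C : Submodule F (Fin n → F)) :
    dualCode C = (stdForm F n).orthogonal C := by
  ext x
  constructor
  · intro hx y hy
    have := hx y hy
    simpa [LinearMap.BilinForm.IsOrtho, mul_comm] using this
  · intro hx y hy
    have := hx y hy
    simpa [LinearMap.BilinForm.IsOrtho, mul_comm] using this

end Aux

theorem stmt2 {F : Type*} [Field F] [Fintype F] {n k : ℕ}
    (C : Submodule F (Fin n → F)) (H : Matrix (Fin k) (Fin n) F)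
    (hspan : dualCode C = Submodule.span F (Set.range fun i => H i))
    (hind : LinearIndependent F (fun i => H i)) :
    IsLCD C ↔ IsUnit (H * H.transpose) := by
    classical
  have hC_le_ker : C ≤ LinearMap.ker H.mulVecLin := by
    intro x hx
    have hrow : ∀ i, H i ∈ dualCode C := by
      intro i
      rw [hspan]
      exact Submodule.subset_span ⟨i, rfl⟩
    simp only [LinearMap.mem_ker]
    funext a
    have := hrow a x hx
    simpa [Matrix.mulVecLin_apply, Matrix.mulVec, dotProduct] using this
  have hfin : Module.finrank F (dualCode C) = k := by
    rw [hspan, finrank_span_eq_card hind]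
    simp
  have hkn : k ≤ n := by
    have := hind.fintype_card_le_finrank
    simpa using this
  have hCrank : Module.finrank F C = n - k := by
    have h2 : Module.finrank F (Fin n → F) = n := by simp
    have h4 := LinearMap.BilinForm.finrank_add_finrank_orthogonal (B := stdForm F n)
      stdForm_refl C
    rw [LinearMap.BilinForm.orthogonal_top_eq_bot stdForm_nondeg, inf_bot_eq, finrank_bot,
      add_zero, ← dualCode_eq_orthogonal, hfin, h2] at h4
    omega
  have hrank : H.rank = k := by
    rw [← Matrix.rank_transpose, Matrix.rank, Matrix.range_mulVecLin]
    show Module.finrank F (Submodule.span F (Set.range fun i => H i)) = k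
    exact hspan ▸ hfin
  have hker : Module.finrank F (LinearMap.ker H.mulVecLin) = n - k := by
    have := LinearMap.finrank_range_add_finrank_ker H.mulVecLin
    have h2 : Module.finrank F (Fin n → F) = n := by simp
    rw [h2] at this
    have : H.rank + Module.finrank F (LinearMap.ker H.mulVecLin) = n := this
    omega
  have hCker : C = LinearMap.ker H.mulVecLin :=
    Submodule.eq_of_le_of_finrank_eq hC_le_ker (by rw [hCrank, hker])
  have key : ∀ v : Fin k → F, H.mulVec (Matrix.vecMul v H) = (H * H.transpose).mulVec v := by
    intro v
    rw [← Matrix.mulVec_transpose, Matrix.mulVec_mulVec]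
  have hvm : ∀ v : Fin k → F, Matrix.vecMul v H = ∑ i, v i • H i := by
    intro v
    funext j
    simp [Matrix.vecMul, dotProduct, Finset.sum_apply]
  constructor
  · intro hLCD
    rw [Matrix.isUnit_iff_isUnit_det, isUnit_iff_ne_zero]
    intro hdet
    obtain ⟨v, hv0, hv⟩ := (Matrix.exists_mulVec_eq_zero_iff).2 hdet
    set x := Matrix.vecMul v H with hxdef
    have hxdual : x ∈ dualCode C := by
      rw [hspan, hxdef, hvm]
      exact Submodule.sum_mem _ fun i _ => Submodule.smul_mem _ _ (Submodule.subset_span ⟨i, rfl⟩)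
    have hxC : x ∈ C := by
      rw [hCker, LinearMap.mem_ker]
      show H.mulVecLin x = 0
      rw [Matrix.mulVecLin_apply, hxdef, key, hv]
    have hxne : x ≠ 0 := by
      intro hx0
      apply hv0
      funext i
      refine Fintype.linearIndependent_iff.1 hind v ?_ i
      rw [← hvm, ← hxdef]
      exact hx0
    have hx : x ∈ C ⊓ dualCode C := ⟨hxC, hxdual⟩
    rw [hLCD] at hx
    exact hxne (by simpa using hx)
  · intro hunit
    rw [IsLCD, eq_bot_iff]
    rintro x ⟨hxC, hxdual⟩
    rw [hspan] at hxdual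
    obtain ⟨v, hv⟩ := (Submodule.mem_span_range_iff_exists_fun F).1 hxdual
    have hx : x = Matrix.vecMul v H := by rw [hvm]; exact hv.symm
    have hx0 : (H * H.transpose).mulVec v = 0 := by
      rw [← key]
      rw [← hx]
      have := hC_le_ker hxC
      simpa [Matrix.mulVecLin_apply] using this
    have hv0 : v = 0 := by
      have hdet : (H * H.transpose).det ≠ 0 :=
        ((Matrix.isUnit_iff_isUnit_det _).1 hunit).ne_zero
      by_contra hne
      exact hdet (Matrix.exists_mulVec_eq_zero_iff.1 ⟨v, hne, hx0⟩)
    simp [hx, hv0, Matrix.vecMul]
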